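/- Green tree formula: for a Markov chain X with stochastic matrix P on finite S, subset R with w(R) > 0, and i, j ∈ S \ R, the expected number of visits to j before hitting R satisfies E_i[ Σ_{n=0}^{T_R − 1} 1(X_n = j) ] = w_{ij}(R ∪ {j}) / w(R). -/

import Mathlib

open Finset

/-- A spanning forest of `S` with root set `R`, encoded as a successor function:
roots are fixed points, and every state eventually reaches `R` under iteration. -/
def IsForest {S : Type*} [Fintype S] [DecidableEq S] (R : Finset S) (f : S → S) : Prop :=
  (∀ i ∈ R, f i = i) ∧ ∀ i : S, ∃ n : ℕ, f^[n] i ∈ R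

/-- The `P`-weight of a forest: product of transition probabilities over its directed edges. -/
noncomputable def forestWt {S : Type*} [Fintype S] [DecidableEq S]
    (p : S → S → ℝ) (R : Finset S) (f : S → S) : ℝ :=
  ∏ i ∈ Rᶜ, p i (f i)

open Classical in
/-- `w p R`: the total `P`-weight of spanning forests with root set `R`. -/
noncomputable def w {S : Type*} [Fintype S] [DecidableEq S]
    (p : S → S → ℝ) (R : Finset S) : ℝ :=
  ∑ f : S → S, if IsForest R f then forestWt p R f else 0

open Classical in
/-- `wroot p A i j`: total weight of forests with root set `A` in which the tree
containing `i` has root `j`. -/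
noncomputable def wroot {S : Type*} [Fintype S] [DecidableEq S]
    (p : S → S → ℝ) (A : Finset S) (i j : S) : ℝ :=
  ∑ f : S → S, if IsForest A f ∧ ∃ n : ℕ, f^[n] i = j then forestWt p A f else 0

/-- `p` is a stochastic matrix. -/
def IsStochastic {S : Type*} [Fintype S] (p : S → S → ℝ) : Prop :=
  (∀ i j, 0 ≤ p i j) ∧ ∀ i, ∑ j, p i j = 1

/-- `p` is irreducible. -/
def PIrreducible {S : Type*} [Fintype S] [DecidableEq S] (p : S → S → ℝ) : Prop :=
  ∀ i j : S, ∃ n : ℕ, 0 < ((Matrix.of p) ^ n) i j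

/-- Weight of a path starting at `i` with successive states given by the list. -/
def wt {S : Type*} (p : S → S → ℝ) : S → List S → ℝ
  | _, [] => 1
  | i, j :: l => p i j * wt p j l

open Classical in
/-- `green p R i j`: expected number of visits to `j` strictly before hitting `R`, started at `i`;
a sum of weights of paths from `i` to `j` avoiding `R`. -/
noncomputable def green {S : Type*} [Fintype S] [DecidableEq S]
    (p : S → S → ℝ) (R : Finset S) (i j : S) : ℝ :=
  ∑' l : {l : List S // (∀ x ∈ l, x ∉ R) ∧ (i :: l).getLast (List.cons_ne_nil i l) = j},
    wt p i l.1


set_option linter.unusedSectionVars false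

section Core
variable {S : Type*} [Fintype S] [DecidableEq S]

lemma iterate_agree {f g : S → S} {a : S} (hfg : ∀ z, z ≠ a → f z = g z) :
    ∀ (n : ℕ) (x : S), (∀ m, m < n → f^[m] x ≠ a) → f^[n] x = g^[n] x := by
  intro n
  induction n with
  | zero => intro x _; rfl
  | succ n ih =>
    intro x hx
    have hx0 : x ≠ a := by simpa using hx 0 (Nat.succ_pos n)
    have h1 : f^[n] (f x) = g^[n] (f x) := by
      refine ih (f x) (fun m hm => ?_)
      have := hx (m + 1) (Nat.succ_lt_succ hm)
      rwa [Function.iterate_succ_apply] at this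
    rw [Function.iterate_succ_apply, Function.iterate_succ_apply, h1, hfg x hx0]

open Classical in
lemma reach_update_iff (h : S → S) (a x : S) :
    (∃ n, (Function.update h a a)^[n] x = a) ↔ (∃ n, h^[n] x = a) := by
  constructor
  · rintro hx
    set g := Function.update h a a with hg
    refine ⟨Nat.find hx, ?_⟩
    have hmin : ∀ m, m < Nat.find hx → g^[m] x ≠ a := fun m hm => Nat.find_min hx hm
    have := iterate_agree (f := g) (g := h) (a := a)
      (fun z hz => Function.update_of_ne hz a h) (Nat.find hx) x hmin
    rw [← this]; exact Nat.find_spec hx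
  · rintro hx
    refine ⟨Nat.find hx, ?_⟩
    have hmin : ∀ m, m < Nat.find hx → h^[m] x ≠ a := fun m hm => Nat.find_min hx hm
    have := iterate_agree (f := h) (g := Function.update h a a) (a := a)
      (fun z hz => (Function.update_of_ne hz a h).symm) (Nat.find hx) x hmin
    rw [← this]; exact Nat.find_spec hx

open Classical in
lemma stops_update (h : S → S) (a : S) (B : Finset S) (haB : a ∈ B) (x : S)
    (hx : ∃ n, h^[n] x ∈ B) : ∃ n, (Function.update h a a)^[n] x ∈ B := by
  refine ⟨Nat.find hx, ?_⟩
  have hmin : ∀ m, m < Nat.find hx → h^[m] x ≠ a := by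
    intro m hm hme
    exact Nat.find_min hx hm (hme ▸ haB)
  have := iterate_agree (f := h) (g := Function.update h a a) (a := a)
    (fun z hz => (Function.update_of_ne hz a h).symm) (Nat.find hx) x hmin
  rw [← this]; exact Nat.find_spec hx

open Classical in
lemma stops_of_update (h : S → S) (a : S) (B : Finset S) (haB : a ∈ B) (x : S)
    (hx : ∃ n, (Function.update h a a)^[n] x ∈ B) : ∃ n, h^[n] x ∈ B := by
  set g := Function.update h a a with hg
  refine ⟨Nat.find hx, ?_⟩
  have hmin : ∀ m, m < Nat.find hx → g^[m] x ≠ a := by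
    intro m hm hme
    exact Nat.find_min hx hm (hme ▸ haB)
  have := iterate_agree (f := g) (g := h) (a := a)
    (fun z hz => Function.update_of_ne hz a h) (Nat.find hx) x hmin
  rw [← this]; exact Nat.find_spec hx

lemma periodic_not_mem (h : S → S) (R : Finset S) (hfix : ∀ r ∈ R, h r = r)
    {x : S} (hx : x ∉ R) {d : ℕ} (hd : 0 < d) (hxd : h^[d] x = x) (n : ℕ) :
    h^[n] x ∉ R := by
  intro hmem
  have hfixn : ∀ s : ℕ, h^[s] (h^[n] x) = h^[n] x :=
    fun s => Function.iterate_fixed (hfix _ hmem) s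
  have h1 : h^[d * (n + 1)] x = x := by
    rw [Function.iterate_mul]
    exact Function.iterate_fixed hxd (n + 1)
  have hge : n + 1 ≤ d * (n + 1) := Nat.le_mul_of_pos_left (n + 1) hd
  have h2 : d * (n + 1) = (d * (n + 1) - n) + n := by omega
  have : x = h^[n] x := by
    conv_lhs => rw [← h1, h2]
    rw [Function.iterate_add_apply]
    exact hfixn _
  exact hx (this ▸ hmem)
end Core

section Core2
variable {S : Type*} [Fintype S] [DecidableEq S]

/-- Condition for `h` to contribute to the LHS of the key identity. -/
def Cpred (R : Finset S) (i j : S) (h : S → S) : Prop :=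
  IsForest (insert j R) (Function.update h j j) ∧ ∃ n, (Function.update h j j)^[n] i = j

/-- Condition for `h` to contribute to the `k`-term of the RHS of the key identity. -/
def Ckpred (R : Finset S) (i j k : S) (h : S → S) : Prop :=
  h k = j ∧ IsForest (insert k R) (Function.update h k k) ∧ ∃ n, (Function.update h k k)^[n] i = k

lemma fix_of_forest {R : Finset S} {a : S} (ha : a ∉ R) {h : S → S}
    (hf : IsForest (insert a R) (Function.update h a a)) : ∀ r ∈ R, h r = r := by
  intro r hr
  have hra : r ≠ a := fun e => ha (e ▸ hr)
  have := hf.1 r (Finset.mem_insert_of_mem hr)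
  rwa [Function.update_of_ne hra] at this

lemma Ck_imp_C {R : Finset S} {i j : S} (hj : j ∉ R) {k : S} (hk : k ∉ R) {h : S → S}
    (hCk : Ckpred R i j k h) : Cpred R i j h := by
  obtain ⟨hkj, hfor, hreach⟩ := hCk
  have hfix : ∀ r ∈ R, h r = r := fix_of_forest hk hfor
  constructor
  · constructor
    · intro r hr
      rcases Finset.mem_insert.1 hr with e | hrR
      · subst e; simp
      · rw [Function.update_of_ne (ne_of_mem_of_not_mem hrR hj), hfix r hrR]
    · intro x
      have h1 : ∃ n, h^[n] x ∈ insert k R :=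
        stops_of_update h k _ (Finset.mem_insert_self k R) x (hfor.2 x)
      have h2 : ∃ n, h^[n] x ∈ insert j R := by
        obtain ⟨n, hn⟩ := h1
        rcases Finset.mem_insert.1 hn with e | hR
        · refine ⟨n + 1, ?_⟩
          rw [Function.iterate_succ_apply', e, hkj]
          exact Finset.mem_insert_self j R
        · exact ⟨n, Finset.mem_insert_of_mem hR⟩
      exact stops_update h j _ (Finset.mem_insert_self j R) x h2
  · obtain ⟨n, hn⟩ := (reach_update_iff h k i).1 hreach
    refine (reach_update_iff h j i).2 ⟨n + 1, ?_⟩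
    rw [Function.iterate_succ_apply', hn, hkj]

lemma oncycle {R : Finset S} {i j : S} (hj : j ∉ R) {k : S} {h : S → S}
    (hfix : ∀ r ∈ R, h r = r) (hCk : Ckpred R i j k h)
    {d : ℕ} (hd : 0 < d) (hper : h^[d] j = j) : ∃ a, h^[a] j = k := by
  by_contra hno
  push_neg at hno
  obtain ⟨_, hfor, _⟩ := hCk
  obtain ⟨n, hn⟩ := hfor.2 j
  have heq : h^[n] j = (Function.update h k k)^[n] j :=
    iterate_agree (fun z hz => (Function.update_of_ne hz k h).symm) n j (fun m _ => hno m)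
  rw [← heq] at hn
  rcases Finset.mem_insert.1 hn with e | hR
  · exact hno n e
  · exact periodic_not_mem h R hfix hj hd hper n hR

lemma Ck_unique {R : Finset S} {i j : S} (hj : j ∉ R) {k1 k2 : S} (hk1 : k1 ∉ R)
    {h : S → S} (h1 : Ckpred R i j k1 h) (h2 : Ckpred R i j k2 h) : k1 = k2 := by
  have hfix := fix_of_forest hk1 h1.2.1
  obtain ⟨n1, hn1⟩ := (reach_update_iff h k1 i).1 h1.2.2
  obtain ⟨n2, hn2⟩ := (reach_update_iff h k2 i).1 h2.2.2
  have hj1 : h^[n1 + 1] i = j := by rw [Function.iterate_succ_apply', hn1, h1.1]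
  have hj2 : h^[n2 + 1] i = j := by rw [Function.iterate_succ_apply', hn2, h2.1]
  rcases lt_trichotomy n1 n2 with hlt | heq | hgt
  case _ => -- n1 < n2
    have hper : h^[n2 - n1] j = j := by
      have hx : h^[(n2 - n1) + (n1 + 1)] i = j := by
        rw [show (n2 - n1) + (n1 + 1) = n2 + 1 by omega]; exact hj2
      rwa [Function.iterate_add_apply, hj1] at hx
    obtain ⟨a, ha⟩ := oncycle hj hfix h1 (by omega) hper
    obtain ⟨b, hb⟩ := oncycle hj hfix h2 (by omega) hper
    have ha1 : h^[a + 1] j = j := by rw [Function.iterate_succ_apply', ha, h1.1]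
    have hb1 : h^[b + 1] j = j := by rw [Function.iterate_succ_apply', hb, h2.1]
    calc k1 = h^[a] j := ha.symm
      _ = h^[a] (h^[b + 1] j) := by rw [hb1]
      _ = h^[b] (h^[a + 1] j) := by
          rw [← Function.iterate_add_apply, ← Function.iterate_add_apply]
          congr 1; omega
      _ = h^[b] j := by rw [ha1]
      _ = k2 := hb
  case _ => rw [← hn1, heq, hn2]
  case _ => -- n2 < n1
    have hper : h^[n1 - n2] j = j := by
      have hx : h^[(n1 - n2) + (n2 + 1)] i = j := by
        rw [show (n1 - n2) + (n2 + 1) = n1 + 1 by omega]; exact hj1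
      rwa [Function.iterate_add_apply, hj2] at hx
    obtain ⟨a, ha⟩ := oncycle hj hfix h1 (by omega) hper
    obtain ⟨b, hb⟩ := oncycle hj hfix h2 (by omega) hper
    have ha1 : h^[a + 1] j = j := by rw [Function.iterate_succ_apply', ha, h1.1]
    have hb1 : h^[b + 1] j = j := by rw [Function.iterate_succ_apply', hb, h2.1]
    calc k1 = h^[a] j := ha.symm
      _ = h^[a] (h^[b + 1] j) := by rw [hb1]
      _ = h^[b] (h^[a + 1] j) := by
          rw [← Function.iterate_add_apply, ← Function.iterate_add_apply]
          congr 1; omega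
      _ = h^[b] j := by rw [ha1]
      _ = k2 := hb

lemma delta_imp_C {R : Finset S} {j : S} (hj : j ∉ R) {h : S → S} (hforest : IsForest R h) :
    Cpred R j j h := by
  refine ⟨⟨?_, ?_⟩, ⟨0, rfl⟩⟩
  · intro r hr
    rcases Finset.mem_insert.1 hr with e | hrR
    · subst e; simp
    · rw [Function.update_of_ne (ne_of_mem_of_not_mem hrR hj), hforest.1 r hrR]
  · intro x
    exact stops_update h j _ (Finset.mem_insert_self j R) x
      ((hforest.2 x).imp fun n hn => Finset.mem_insert_of_mem hn)

lemma delta_no_k {R : Finset S} {i j : S} (hj : j ∉ R) (hij : i = j) {h : S → S}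
    (hforest : IsForest R h) {k : S} : ¬ Ckpred R i j k h := by
  rintro ⟨hkj, _, hreach⟩
  subst hij
  obtain ⟨n, hn⟩ := (reach_update_iff h k i).1 hreach
  have hper : h^[n + 1] i = i := by rw [Function.iterate_succ_apply', hn, hkj]
  obtain ⟨m, hm⟩ := hforest.2 i
  exact periodic_not_mem h R hforest.1 hj (Nat.succ_pos n) hper m hm

lemma C_imp_exists {R : Finset S} {i j : S} (hj : j ∉ R) {h : S → S}
    (hC : Cpred R i j h) (hnd : ¬ (i = j ∧ IsForest R h)) :
    ∃ k, k ∉ R ∧ Ckpred R i j k h := by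
  obtain ⟨hfor, hreach⟩ := hC
  have hfix : ∀ r ∈ R, h r = r := fix_of_forest hj hfor
  by_cases hret : ∃ d, 0 < d ∧ h^[d] j = j
  · obtain ⟨d, hd, hper⟩ := hret
    set k := h^[d - 1] j with hk
    have hkj : h k = j := by
      have hx : h^[(d - 1) + 1] j = j := by rw [show d - 1 + 1 = d by omega]; exact hper
      rw [Function.iterate_succ_apply'] at hx
      exact hx
    have hkR : k ∉ R := fun hmem => hj (by rw [← hkj, hfix k hmem]; exact hmem)
    refine ⟨k, hkR, hkj, ⟨?_, ?_⟩, ?_⟩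
    · intro r hr
      rcases Finset.mem_insert.1 hr with e | hrR
      · subst e; simp
      · rw [Function.update_of_ne (ne_of_mem_of_not_mem hrR hkR), hfix r hrR]
    · intro x
      obtain ⟨n, hn⟩ := stops_of_update h j _ (Finset.mem_insert_self j R) x (hfor.2 x)
      have h2 : ∃ n, h^[n] x ∈ insert k R := by
        rcases Finset.mem_insert.1 hn with e | hR
        · refine ⟨(d - 1) + n, ?_⟩
          rw [Function.iterate_add_apply, e, ← hk]
          exact Finset.mem_insert_self k R
        · exact ⟨n, Finset.mem_insert_of_mem hR⟩
      exact stops_update h k _ (Finset.mem_insert_self k R) x h2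
    · obtain ⟨m, hm⟩ := (reach_update_iff h j i).1 hreach
      refine (reach_update_iff h k i).2 ⟨(d - 1) + m, ?_⟩
      rw [Function.iterate_add_apply, hm, ← hk]
  · push_neg at hret
    have hjr : ∃ m, h^[m] j ∈ R := by
      obtain ⟨n, hn⟩ := stops_of_update h j _ (Finset.mem_insert_self j R) (h j) (hfor.2 (h j))
      rw [← Function.iterate_succ_apply] at hn
      rcases Finset.mem_insert.1 hn with e | hR
      · exact absurd e (hret (n + 1) (Nat.succ_pos n))
      · exact ⟨n + 1, hR⟩
    have hforest : IsForest R h := by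
      refine ⟨hfix, fun x => ?_⟩
      obtain ⟨n, hn⟩ := stops_of_update h j _ (Finset.mem_insert_self j R) x (hfor.2 x)
      rcases Finset.mem_insert.1 hn with e | hR
      · obtain ⟨m, hm⟩ := hjr
        exact ⟨m + n, by rw [Function.iterate_add_apply, e]; exact hm⟩
      · exact ⟨n, hR⟩
    have hij : i ≠ j := fun e => hnd ⟨e, hforest⟩
    obtain ⟨n, hn⟩ := (reach_update_iff h j i).1 hreach
    have hn0 : n ≠ 0 := by rintro rfl; exact hij hn
    set k := h^[n - 1] i with hk
    have hkj : h k = j := by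
      have hx : h^[(n - 1) + 1] i = j := by rw [show n - 1 + 1 = n by omega]; exact hn
      rw [Function.iterate_succ_apply'] at hx
      exact hx
    have hkR : k ∉ R := fun hmem => hj (by rw [← hkj, hfix k hmem]; exact hmem)
    refine ⟨k, hkR, hkj, ⟨?_, ?_⟩, ?_⟩
    · intro r hr
      rcases Finset.mem_insert.1 hr with e | hrR
      · subst e; simp
      · rw [Function.update_of_ne (ne_of_mem_of_not_mem hrR hkR), hfix r hrR]
    · intro x
      obtain ⟨m, hm⟩ := hforest.2 x
      exact stops_update h k _ (Finset.mem_insert_self k R) x ⟨m, Finset.mem_insert_of_mem hm⟩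
    · exact (reach_update_iff h k i).2 ⟨n - 1, hk.symm⟩

open Classical in
lemma core_count {R : Finset S} {i j : S} (hj : j ∉ R) (h : S → S) :
    (if Cpred R i j h then (1 : ℝ) else 0) =
      (if i = j ∧ IsForest R h then (1 : ℝ) else 0) +
        ∑ k ∈ Rᶜ, (if Ckpred R i j k h then (1 : ℝ) else 0) := by
  by_cases hC : Cpred R i j h
  · by_cases hD : i = j ∧ IsForest R h
    · rw [if_pos hC, if_pos hD, Finset.sum_eq_zero, add_zero]
      intro k hk
      exact if_neg (delta_no_k hj hD.1 hD.2)
    · obtain ⟨k, hkR, hCk⟩ := C_imp_exists hj hC hD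
      rw [if_pos hC, if_neg hD, zero_add,
        Finset.sum_eq_single_of_mem k (Finset.mem_compl.2 hkR), if_pos hCk]
      intro b hb hbk
      refine if_neg (fun hCb => hbk ?_)
      exact Ck_unique hj (Finset.mem_compl.1 hb) hCb hCk
  · have h1 : (if i = j ∧ IsForest R h then (1 : ℝ) else 0) = 0 := by
      refine if_neg ?_
      rintro ⟨e, hf⟩
      subst e
      exact hC (delta_imp_C hj hf)
    have h2 : ∑ k ∈ Rᶜ, (if Ckpred R i j k h then (1 : ℝ) else 0) = 0 :=
      Finset.sum_eq_zero fun k hk =>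
        if_neg (fun hCk => hC (Ck_imp_C hj (Finset.mem_compl.1 hk) hCk))
    rw [if_neg hC, h1, h2, add_zero]
end Core2

section Key
variable {S : Type*} [Fintype S] [DecidableEq S]

lemma forestWt_insert (p : S → S → ℝ) {R : Finset S} {a : S} (ha : a ∉ R) (h : S → S) :
    forestWt p R h = p a (h a) * forestWt p (insert a R) h := by
  unfold forestWt
  rw [Finset.compl_insert]
  exact (Finset.mul_prod_erase Rᶜ _ (Finset.mem_compl.2 ha)).symm

lemma forestWt_update (p : S → S → ℝ) {R : Finset S} {a : S} (m : S) (h : S → S) :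
    forestWt p (insert a R) (Function.update h a m) = forestWt p (insert a R) h := by
  unfold forestWt
  refine Finset.prod_congr rfl fun x hx => ?_
  rw [Function.update_of_ne]
  intro e
  exact (Finset.mem_compl.1 hx) (e ▸ Finset.mem_insert_self a R)

open Classical in
lemma step1 (p : S → S → ℝ) (hrow : ∀ a, ∑ b, p a b = 1) {R : Finset S} {i j : S}
    (hj : j ∉ R) :
    wroot p (insert j R) i j = ∑ h : S → S, (if Cpred R i j h then forestWt p R h else 0) := by
  have hσ : Function.Involutive (fun q : (S → S) × S => (Function.update q.1 j q.2, q.1 j)) := by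
    rintro ⟨f, m⟩
    simp [Function.update_idem]
  let e := hσ.toPerm
  have c1 : wroot p (insert j R) i j = ∑ q : (S → S) × S,
      (if IsForest (insert j R) q.1 ∧ ∃ n : ℕ, q.1^[n] i = j then
        forestWt p (insert j R) q.1 * p j q.2 else 0) := by
    rw [Fintype.sum_prod_type]
    unfold wroot
    refine Finset.sum_congr rfl fun f _ => ?_
    by_cases hf : IsForest (insert j R) f ∧ ∃ n : ℕ, f^[n] i = j
    · rw [if_pos hf]
      simp only [if_pos hf, ← Finset.mul_sum, hrow j, mul_one]
    · rw [if_neg hf]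
      simp only [if_neg hf, Finset.sum_const_zero]
  rw [c1, ← Equiv.sum_comp e, Fintype.sum_prod_type]
  refine Finset.sum_congr rfl fun f _ => ?_
  have hpt : ∀ m : S, (if IsForest (insert j R) (Function.update f j m) ∧
        (∃ n : ℕ, (Function.update f j m)^[n] i = j) then
        forestWt p (insert j R) (Function.update f j m) * p j (f j) else 0) =
      if m = j then (if Cpred R i j f then p j (f j) * forestWt p (insert j R) f else 0)
        else 0 := by
    intro m
    by_cases hm : m = j
    · subst hm
      by_cases hc : Cpred R i m f
      · rw [if_pos (show IsForest (insert m R) (Function.update f m m) ∧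
            (∃ n : ℕ, (Function.update f m m)^[n] i = m) from hc),
          if_pos rfl, if_pos hc, forestWt_update, mul_comm]
      · rw [if_neg, if_pos rfl, if_neg hc]
        exact fun hd => hc hd
    · rw [if_neg hm, if_neg]
      intro hd
      have := hd.1.1 j (Finset.mem_insert_self j R)
      rw [Function.update_self] at this
      exact hm this
  calc ∑ m : S, _ = ∑ m : S, if m = j then
          (if Cpred R i j f then p j (f j) * forestWt p (insert j R) f else 0) else 0 :=
        Finset.sum_congr rfl fun m _ => hpt m
    _ = if Cpred R i j f then p j (f j) * forestWt p (insert j R) f else 0 := by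
        rw [Finset.sum_ite_eq' Finset.univ j, if_pos (Finset.mem_univ j)]
    _ = if Cpred R i j f then forestWt p R f else 0 := by
        by_cases hc : Cpred R i j f
        · rw [if_pos hc, if_pos hc, ← forestWt_insert p hj]
        · rw [if_neg hc, if_neg hc]

open Classical in
lemma step2 (p : S → S → ℝ) {R : Finset S} {i j : S} {k : S} (hk : k ∉ R) :
    ∑ h : S → S, (if Ckpred R i j k h then forestWt p R h else 0)
      = wroot p (insert k R) i k * p k j := by
  have hσ : Function.Involutive (fun q : (S → S) × S => (Function.update q.1 k q.2, q.1 k)) := by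
    rintro ⟨f, m⟩
    simp [Function.update_idem]
  let e := hσ.toPerm
  have c1 : ∑ q : (S → S) × S, (if q.2 = k ∧ Ckpred R i j k q.1 then forestWt p R q.1 else 0)
      = ∑ h : S → S, (if Ckpred R i j k h then forestWt p R h else 0) := by
    rw [Fintype.sum_prod_type]
    refine Finset.sum_congr rfl fun h _ => ?_
    calc ∑ m : S, (if m = k ∧ Ckpred R i j k h then forestWt p R h else 0)
        = ∑ m : S, (if m = k then (if Ckpred R i j k h then forestWt p R h else 0) else 0) :=
          Finset.sum_congr rfl fun m _ => by rw [ite_and]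
      _ = _ := by rw [Finset.sum_ite_eq' Finset.univ k, if_pos (Finset.mem_univ k)]
  rw [← c1, ← Equiv.sum_comp e, Fintype.sum_prod_type]
  have hpt : ∀ (f : S → S) (u : S),
      (if f k = k ∧ Ckpred R i j k (Function.update f k u) then
        forestWt p R (Function.update f k u) else 0) =
      if u = j then (if IsForest (insert k R) f ∧ (∃ n : ℕ, f^[n] i = k) then
        forestWt p (insert k R) f * p k j else 0) else 0 := by
    intro f u
    by_cases hfk : f k = k
    · have hupd : Function.update f k k = f := by
        funext x
        rcases eq_or_ne x k with rfl | hx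
        · rw [Function.update_self, hfk]
        · rw [Function.update_of_ne hx]
      have hCk : Ckpred R i j k (Function.update f k u) ↔
          (u = j ∧ (IsForest (insert k R) f ∧ ∃ n : ℕ, f^[n] i = k)) := by
        unfold Ckpred
        rw [Function.update_idem, hupd, Function.update_self]
      by_cases hu : u = j
      · subst hu
        by_cases hDf : IsForest (insert k R) f ∧ ∃ n : ℕ, f^[n] i = k
        · rw [if_pos ⟨hfk, hCk.2 ⟨rfl, hDf⟩⟩, if_pos rfl, if_pos hDf]
          rw [forestWt_insert p hk, Function.update_self, forestWt_update, mul_comm]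
        · rw [if_neg, if_pos rfl, if_neg hDf]
          rintro ⟨-, hc⟩
          exact hDf (hCk.1 hc).2
      · rw [if_neg, if_neg hu]
        rintro ⟨-, hc⟩
        exact hu (hCk.1 hc).1
    · rw [if_neg (fun hc => hfk hc.1)]
      by_cases hu : u = j
      · rw [if_pos hu, if_neg]
        rintro ⟨hf, -⟩
        exact hfk (hf.1 k (Finset.mem_insert_self k R))
      · rw [if_neg hu]
  calc ∑ f : S → S, ∑ u : S, _ = ∑ f : S → S, ∑ u : S,
        (if u = j then (if IsForest (insert k R) f ∧ (∃ n : ℕ, f^[n] i = k) then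
          forestWt p (insert k R) f * p k j else 0) else 0) :=
        Finset.sum_congr rfl fun f _ => Finset.sum_congr rfl fun u _ => hpt f u
    _ = ∑ f : S → S, (if IsForest (insert k R) f ∧ (∃ n : ℕ, f^[n] i = k) then
          forestWt p (insert k R) f * p k j else 0) :=
        Finset.sum_congr rfl fun f _ => by
          rw [Finset.sum_ite_eq' Finset.univ j, if_pos (Finset.mem_univ j)]
    _ = wroot p (insert k R) i k * p k j := by
        unfold wroot
        rw [Finset.sum_mul]
        refine Finset.sum_congr rfl fun f _ => ?_
        rw [ite_mul, zero_mul]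

open Classical in
lemma key_identity (p : S → S → ℝ) (hrow : ∀ a, ∑ b, p a b = 1) {R : Finset S} {i j : S}
    (hj : j ∉ R) :
    wroot p (insert j R) i j =
      (if i = j then w p R else 0) + ∑ k ∈ Rᶜ, wroot p (insert k R) i k * p k j := by
  rw [step1 p hrow hj]
  have hcc : ∀ h : S → S, (if Cpred R i j h then forestWt p R h else 0) =
      (if i = j ∧ IsForest R h then forestWt p R h else 0) +
        ∑ k ∈ Rᶜ, (if Ckpred R i j k h then forestWt p R h else 0) := by
    intro h
    have hc := core_count (R := R) (i := i) hj h
    have hmul := congrArg (fun t : ℝ => t * forestWt p R h) hc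
    simp only [add_mul, Finset.sum_mul, ite_mul, one_mul, zero_mul] at hmul
    exact hmul
  rw [Finset.sum_congr rfl fun h _ => hcc h, Finset.sum_add_distrib]
  congr 1
  · by_cases hij : i = j
    · rw [if_pos hij]
      unfold w
      refine Finset.sum_congr rfl fun h _ => ?_
      by_cases hf : IsForest R h
      · rw [if_pos ⟨hij, hf⟩, if_pos hf]
      · rw [if_neg (fun hd => hf hd.2), if_neg hf]
    · rw [if_neg hij, Finset.sum_eq_zero fun h _ => if_neg (fun hd => hij hd.1)]
  · rw [Finset.sum_comm]
    exact Finset.sum_congr rfl fun k hk => step2 p (Finset.mem_compl.1 hk)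
end Key

section Anal
variable {S : Type*} [Fintype S] [DecidableEq S]

/-- Taboo transition matrix: transitions into `R` are killed. -/
noncomputable def Qm (p : S → S → ℝ) (R : Finset S) : Matrix S S ℝ :=
  Matrix.of fun a b => if b ∈ R then 0 else p a b

/-- Row sums of powers of the taboo matrix. -/
noncomputable def usum (p : S → S → ℝ) (R : Finset S) (n : ℕ) (x : S) : ℝ :=
  ∑ y, (Qm p R ^ n) x y

variable {p : S → S → ℝ} {R : Finset S}

lemma Qm_nonneg (hp0 : ∀ a b, 0 ≤ p a b) (a b : S) : 0 ≤ Qm p R a b := by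
  unfold Qm
  dsimp only [Matrix.of_apply]
  split_ifs
  · exact le_refl 0
  · exact hp0 a b

lemma Qm_le (hp0 : ∀ a b, 0 ≤ p a b) (a b : S) : Qm p R a b ≤ p a b := by
  unfold Qm
  dsimp only [Matrix.of_apply]
  split_ifs
  · exact hp0 a b
  · exact le_refl _

lemma Qm_mem (a : S) {b : S} (hb : b ∈ R) : Qm p R a b = 0 := by
  unfold Qm
  dsimp only [Matrix.of_apply]
  exact if_pos hb

lemma Qpow_nonneg (hp0 : ∀ a b, 0 ≤ p a b) : ∀ (n : ℕ) (a b : S), 0 ≤ (Qm p R ^ n) a b := by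
  intro n
  induction n with
  | zero =>
    intro a b
    rw [pow_zero]
    rcases eq_or_ne a b with rfl | hab
    · rw [Matrix.one_apply_eq]; norm_num
    · rw [Matrix.one_apply_ne hab]
  | succ n ih =>
    intro a b
    rw [pow_succ, Matrix.mul_apply]
    exact Finset.sum_nonneg fun c _ => mul_nonneg (ih a c) (Qm_nonneg hp0 c b)

lemma Qpow_mem (hp0 : ∀ a b, 0 ≤ p a b) :
    ∀ (n : ℕ) (a : S) {b : S}, a ∉ R → b ∈ R → (Qm p R ^ n) a b = 0 := by
  intro n a b ha hb
  cases n with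
  | zero =>
    rw [pow_zero, Matrix.one_apply_ne]
    exact fun e => ha (e ▸ hb)
  | succ n =>
    rw [pow_succ, Matrix.mul_apply]
    exact Finset.sum_eq_zero fun c _ => by rw [Qm_mem c hb, mul_zero]

lemma Qrow_le_one (hp0 : ∀ a b, 0 ≤ p a b) (hrow : ∀ a, ∑ b, p a b = 1) (x : S) :
    ∑ y, Qm p R x y ≤ 1 := by
  rw [← hrow x]
  exact Finset.sum_le_sum fun y _ => Qm_le hp0 x y

lemma usum_add (a b : ℕ) (x : S) :
    usum p R (a + b) x = ∑ z, (Qm p R ^ a) x z * usum p R b z := by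
  unfold usum
  simp only [pow_add, Matrix.mul_apply]
  rw [Finset.sum_comm]
  exact Finset.sum_congr rfl fun z _ => (Finset.mul_sum _ _ _).symm

lemma usum_zero (x : S) : usum p R 0 x = 1 := by
  unfold usum
  rw [pow_zero]
  simp [Matrix.one_apply]

lemma usum_le_one (hp0 : ∀ a b, 0 ≤ p a b) (hrow : ∀ a, ∑ b, p a b = 1) :
    ∀ (n : ℕ) (x : S), usum p R n x ≤ 1 := by
  intro n
  induction n with
  | zero => intro x; rw [usum_zero]
  | succ n ih =>
    intro x
    have : usum p R (1 + n) x = ∑ z, Qm p R x z * usum p R n z := by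
      rw [usum_add 1 n x]
      refine Finset.sum_congr rfl fun z _ => ?_
      rw [pow_one]
    rw [show n + 1 = 1 + n by omega, this]
    calc ∑ z, Qm p R x z * usum p R n z ≤ ∑ z, Qm p R x z * 1 :=
          Finset.sum_le_sum fun z _ => mul_le_mul_of_nonneg_left (ih z) (Qm_nonneg hp0 x z)
      _ ≤ 1 := by simpa using Qrow_le_one hp0 hrow x

lemma usum_nonneg (hp0 : ∀ a b, 0 ≤ p a b) (n : ℕ) (x : S) : 0 ≤ usum p R n x :=
  Finset.sum_nonneg fun y _ => Qpow_nonneg hp0 n x y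

lemma entry_le_usum (hp0 : ∀ a b, 0 ≤ p a b) (n : ℕ) (x j : S) :
    (Qm p R ^ n) x j ≤ usum p R n x :=
  Finset.single_le_sum (fun y _ => Qpow_nonneg hp0 n x y) (Finset.mem_univ j)

end Anal

section Anal2
variable {S : Type*} [Fintype S] [DecidableEq S] {p : S → S → ℝ} {R : Finset S}

lemma exists_pos_forest (hp0 : ∀ a b, 0 ≤ p a b) (hw : 0 < w p R) :
    ∃ f, IsForest R f ∧ ∀ y ∉ R, 0 < p y (f y) := by
  classical
  by_contra hall
  push_neg at hall
  have hle : w p R ≤ 0 := by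
    unfold w
    refine Finset.sum_nonpos fun f _ => ?_
    split_ifs with hf
    · obtain ⟨y, hy, hle⟩ := hall f hf
      have hz : p y (f y) = 0 := le_antisymm hle (hp0 y (f y))
      exact le_of_eq (Finset.prod_eq_zero (Finset.mem_compl.2 hy) hz)
    · exact le_refl 0
  linarith

open Classical in
lemma summable_Qpow (hp0 : ∀ a b, 0 ≤ p a b) (hrow : ∀ a, ∑ b, p a b = 1)
    (hw : 0 < w p R) {x : S} (hx : x ∉ R) (j : S) :
    Summable (fun n => (Qm p R ^ n) x j) := by
  obtain ⟨f₀, hf₀, hpos⟩ := exists_pos_forest hp0 hw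
  have hne : Rᶜ.Nonempty := ⟨x, Finset.mem_compl.2 hx⟩
  set c : ℝ := Rᶜ.inf' hne (fun y => p y (f₀ y)) with hc
  have hc0 : 0 < c := by
    rw [hc, Finset.lt_inf'_iff]
    exact fun y hy => hpos y (Finset.mem_compl.1 hy)
  have hc1 : c ≤ 1 := by
    refine le_trans (Finset.inf'_le _ (Finset.mem_compl.2 hx)) ?_
    rw [← hrow x]
    exact Finset.single_le_sum (fun y _ => hp0 x y) (Finset.mem_univ _)
  -- rank bound
  have hS2 : ∀ n : ℕ, ∀ y, y ∉ R → (∃ m, m ≤ n ∧ f₀^[m] y ∈ R) →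
      usum p R n y ≤ 1 - c ^ n := by
    intro n
    induction n with
    | zero =>
      rintro y hy ⟨m, hm, hmem⟩
      rw [Nat.le_zero.1 hm] at hmem
      exact absurd hmem hy
    | succ n ih =>
      rintro y hy ⟨m, hm, hmem⟩
      have hm0 : m ≠ 0 := by rintro rfl; exact hy hmem
      have hcy : c ≤ p y (f₀ y) := Finset.inf'_le _ (Finset.mem_compl.2 hy)
      have hrec : usum p R (n + 1) y = ∑ z, Qm p R y z * usum p R n z := by
        rw [show n + 1 = 1 + n by omega, usum_add]
        exact Finset.sum_congr rfl fun z _ => by rw [pow_one]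
      by_cases hfy : f₀ y ∈ R
      · have h1 : ∑ z, Qm p R y z * usum p R n z ≤ ∑ z, Qm p R y z := by
          calc ∑ z, Qm p R y z * usum p R n z ≤ ∑ z, Qm p R y z * 1 :=
              Finset.sum_le_sum fun z _ =>
                mul_le_mul_of_nonneg_left (usum_le_one hp0 hrow n z) (Qm_nonneg hp0 y z)
            _ = ∑ z, Qm p R y z := by simp
        have hz : Qm p R y (f₀ y) = 0 := Qm_mem y hfy
        have e1 : ∑ z, Qm p R y z = ∑ z ∈ Finset.univ.erase (f₀ y), Qm p R y z := by
          rw [← Finset.add_sum_erase Finset.univ _ (Finset.mem_univ (f₀ y)), hz, zero_add]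
        have e2 : ∑ z ∈ Finset.univ.erase (f₀ y), Qm p R y z
            ≤ ∑ z ∈ Finset.univ.erase (f₀ y), p y z :=
          Finset.sum_le_sum fun z _ => Qm_le hp0 y z
        have e3 : ∑ z ∈ Finset.univ.erase (f₀ y), p y z = 1 - p y (f₀ y) := by
          rw [Finset.sum_erase_eq_sub (Finset.mem_univ _), hrow y]
        have hcn : c ^ (n + 1) ≤ c := by
          calc c ^ (n + 1) ≤ c ^ 1 := pow_le_pow_of_le_one hc0.le hc1 (by omega)
            _ = c := pow_one c
        rw [hrec]
        rw [e1] at h1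
        linarith
      · obtain ⟨m', rfl⟩ : ∃ m', m = m' + 1 := ⟨m - 1, by omega⟩
        rw [Function.iterate_succ_apply] at hmem
        have hIH : usum p R n (f₀ y) ≤ 1 - c ^ n := ih (f₀ y) hfy ⟨m', by omega, hmem⟩
        have hQfy : Qm p R y (f₀ y) = p y (f₀ y) := by
          unfold Qm; dsimp only [Matrix.of_apply]; exact if_neg hfy
        have e1 : ∑ z, Qm p R y z * usum p R n z = Qm p R y (f₀ y) * usum p R n (f₀ y) +
            ∑ z ∈ Finset.univ.erase (f₀ y), Qm p R y z * usum p R n z :=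
          (Finset.add_sum_erase Finset.univ _ (Finset.mem_univ (f₀ y))).symm
        have e2 : ∑ z ∈ Finset.univ.erase (f₀ y), Qm p R y z * usum p R n z
            ≤ ∑ z ∈ Finset.univ.erase (f₀ y), Qm p R y z :=
          calc ∑ z ∈ Finset.univ.erase (f₀ y), Qm p R y z * usum p R n z
              ≤ ∑ z ∈ Finset.univ.erase (f₀ y), Qm p R y z * 1 :=
              Finset.sum_le_sum fun z _ =>
                mul_le_mul_of_nonneg_left (usum_le_one hp0 hrow n z) (Qm_nonneg hp0 y z)
            _ = _ := by simp
        have e3 : Qm p R y (f₀ y) * usum p R n (f₀ y) ≤ Qm p R y (f₀ y) * (1 - c ^ n) :=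
          mul_le_mul_of_nonneg_left hIH (Qm_nonneg hp0 y (f₀ y))
        have e4 : ∑ z ∈ Finset.univ.erase (f₀ y), Qm p R y z
            = (∑ z, Qm p R y z) - Qm p R y (f₀ y) :=
          Finset.sum_erase_eq_sub (Finset.mem_univ _)
        have hrow' : ∑ z, Qm p R y z ≤ 1 := Qrow_le_one hp0 hrow y
        have e5 : c * c ^ n ≤ Qm p R y (f₀ y) * c ^ n :=
          mul_le_mul_of_nonneg_right (by rw [hQfy]; exact hcy) (pow_nonneg hc0.le n)
        have e6 : Qm p R y (f₀ y) * (1 - c ^ n)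
            = Qm p R y (f₀ y) - Qm p R y (f₀ y) * c ^ n := by ring
        have e7 : c ^ (n + 1) = c * c ^ n := by rw [pow_succ, mul_comm]
        rw [hrec]
        linarith
  -- rank and N
  have hrk : ∀ y : S, ∃ m, f₀^[m] y ∈ R := hf₀.2
  set N : ℕ := max 1 (Finset.univ.sup fun y => Nat.find (hrk y)) with hN
  have hN1 : 1 ≤ N := le_max_left _ _
  have hNrk : ∀ y, ∃ m, m ≤ N ∧ f₀^[m] y ∈ R := by
    intro y
    refine ⟨Nat.find (hrk y), ?_, Nat.find_spec (hrk y)⟩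
    have h1 : Nat.find (hrk y) ≤ Finset.univ.sup fun z => Nat.find (hrk z) :=
      Finset.le_sup (f := fun z => Nat.find (hrk z)) (Finset.mem_univ y)
    exact le_trans h1 (le_max_right _ _)
  set r : ℝ := 1 - c ^ N with hr
  have hcN1 : c ^ N ≤ 1 := pow_le_one₀ hc0.le hc1
  have hcN0 : 0 < c ^ N := pow_pos hc0 N
  have hr0 : 0 ≤ r := by rw [hr]; linarith
  have hr1 : r < 1 := by rw [hr]; linarith
  have husumN : ∀ y, y ∉ R → usum p R N y ≤ r := fun y hy => hS2 N y hy (hNrk y)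
  have hstep : ∀ (a : ℕ), usum p R (a + N) x ≤ usum p R a x * r := by
    intro a
    rw [usum_add]
    calc ∑ z, (Qm p R ^ a) x z * usum p R N z ≤ ∑ z, (Qm p R ^ a) x z * r := by
          refine Finset.sum_le_sum fun z _ => ?_
          by_cases hz : z ∈ R
          · rw [Qpow_mem hp0 a x hx hz, zero_mul, zero_mul]
          · exact mul_le_mul_of_nonneg_left (husumN z hz) (Qpow_nonneg hp0 a x z)
      _ = usum p R a x * r := by rw [← Finset.sum_mul]; rfl
  have hgeo : ∀ k : ℕ, usum p R (k * N) x ≤ r ^ k := by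
    intro k
    induction k with
    | zero => rw [zero_mul, usum_zero, pow_zero]
    | succ k ih =>
      calc usum p R ((k + 1) * N) x = usum p R (k * N + N) x := by rw [Nat.succ_mul]
        _ ≤ usum p R (k * N) x * r := hstep (k * N)
        _ ≤ r ^ k * r := mul_le_mul_of_nonneg_right ih hr0
        _ = r ^ (k + 1) := by rw [pow_succ]
  have hanti : ∀ m n : ℕ, m ≤ n → usum p R n x ≤ usum p R m x := by
    have hsucc : ∀ a : ℕ, usum p R (a + 1) x ≤ usum p R a x := by
      intro a
      rw [usum_add]
      calc ∑ z, (Qm p R ^ a) x z * usum p R 1 z ≤ ∑ z, (Qm p R ^ a) x z * 1 := by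
            refine Finset.sum_le_sum fun z _ => ?_
            exact mul_le_mul_of_nonneg_left (usum_le_one hp0 hrow 1 z) (Qpow_nonneg hp0 a x z)
        _ = usum p R a x := by simp [usum]
    intro m n hmn
    exact antitone_nat_of_succ_le (f := fun n => usum p R n x) hsucc hmn
  have hub : ∀ n : ℕ, usum p R n x ≤ r ^ (n / N) := by
    intro n
    calc usum p R n x ≤ usum p R (n / N * N) x := hanti _ _ (Nat.div_mul_le_self n N)
      _ ≤ r ^ (n / N) := hgeo (n / N)
  -- geometric sums
  have hβ : (0 : ℝ) < 1 - r := by linarith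
  have hgs : ∀ K : ℕ, ∑ k ∈ Finset.range K, r ^ k ≤ (1 - r)⁻¹ := by
    intro K
    have hmul := geom_sum_mul (x := r) (n := K)
    have hpK : 0 ≤ r ^ K := pow_nonneg hr0 K
    rw [inv_eq_one_div, le_div_iff₀ hβ]
    nlinarith [hmul]
  have hblock : ∀ K : ℕ, ∑ n ∈ Finset.range (N * K), r ^ (n / N)
      ≤ N * ∑ k ∈ Finset.range K, r ^ k := by
    intro K
    induction K with
    | zero => simp
    | succ K ih =>
      have hNsucc : N * (K + 1) = N * K + N := Nat.mul_succ N K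
      have hsplit : ∑ n ∈ Finset.range (N * (K + 1)), r ^ (n / N)
          = ∑ n ∈ Finset.range (N * K), r ^ (n / N)
            + ∑ i ∈ Finset.range N, r ^ ((N * K + i) / N) := by
        rw [hNsucc, Finset.range_eq_Ico, ← Finset.sum_Ico_consecutive _ (Nat.zero_le (N * K))
          (Nat.le_add_right _ _), ← Finset.range_eq_Ico, Finset.sum_Ico_eq_sum_range]
        congr 1
        rw [Nat.add_sub_cancel_left]
      have hinner : ∑ i ∈ Finset.range N, r ^ ((N * K + i) / N)
          = (N : ℝ) * r ^ K := by
        rw [Finset.sum_congr rfl (fun i hi => ?_), Finset.sum_const, Finset.card_range,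
          nsmul_eq_mul]
        congr 1
        have hiN : i < N := Finset.mem_range.1 hi
        rw [show N * K + i = i + N * K by ring, Nat.add_mul_div_left _ _ (show 0 < N by omega),
          Nat.div_eq_of_lt hiN, zero_add]
      rw [hsplit, hinner, Finset.sum_range_succ, mul_add]
      exact add_le_add ih (le_refl _)
  have hps : ∀ M : ℕ, ∑ n ∈ Finset.range M, (Qm p R ^ n) x j ≤ (N : ℝ) * (1 - r)⁻¹ := by
    intro M
    have h1 : ∑ n ∈ Finset.range M, (Qm p R ^ n) x j ≤ ∑ n ∈ Finset.range M, r ^ (n / N) :=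
      Finset.sum_le_sum fun n _ => le_trans (entry_le_usum hp0 n x j) (hub n)
    have h2 : ∑ n ∈ Finset.range M, r ^ (n / N) ≤ ∑ n ∈ Finset.range (N * M), r ^ (n / N) := by
      refine Finset.sum_le_sum_of_subset_of_nonneg ?_ fun n _ _ => pow_nonneg hr0 _
      exact Finset.range_subset_range.2 (by nlinarith [hN1])
    have h3 := hblock M
    have h4 : (N : ℝ) * ∑ k ∈ Finset.range M, r ^ k ≤ (N : ℝ) * (1 - r)⁻¹ :=
      mul_le_mul_of_nonneg_left (hgs M) (by positivity)
    linarith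
  exact summable_of_sum_range_le (fun n => Qpow_nonneg hp0 n x j) hps
end Anal2

section Paths
variable {S : Type*} [Fintype S] [DecidableEq S]

lemma wt_nonneg {p : S → S → ℝ} (hp0 : ∀ a b, 0 ≤ p a b) :
    ∀ (l : List S) (a : S), 0 ≤ wt p a l := by
  intro l
  induction l with
  | nil => intro a; rw [wt]; norm_num
  | cons b t ih => intro a; rw [wt]; exact mul_nonneg (hp0 a b) (ih b)

lemma getLast_cons_eq_getLastD (a : S) (l : List S) :
    (a :: l).getLast (List.cons_ne_nil a l) = l.getLastD a := by
  induction l generalizing a with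
  | nil => rfl
  | cons b t ih =>
    rw [List.getLast_cons (List.cons_ne_nil b t), List.getLastD_cons]
    exact ih b

open Classical in
/-- Weight of a path `x :: l`, kept only if it avoids `R` and ends at `j`. -/
noncomputable def payload (p : S → S → ℝ) (R : Finset S) (j : S) (x : S) (l : List S) : ℝ :=
  if (∀ y ∈ l, y ∉ R) ∧ l.getLastD x = j then wt p x l else 0

lemma payload_cons (p : S → S → ℝ) (R : Finset S) (j x y : S) (l : List S) :
    payload p R j x (y :: l) = (if y ∈ R then 0 else p x y) * payload p R j y l := by
  classical
  unfold payload
  rw [List.getLastD_cons]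
  by_cases hy : y ∈ R
  · rw [if_pos hy, zero_mul, if_neg]
    rintro ⟨hall, -⟩
    exact hall y List.mem_cons_self hy
  · rw [if_neg hy]
    by_cases hrest : (∀ z ∈ l, z ∉ R) ∧ l.getLastD y = j
    · rw [if_pos hrest, if_pos]
      · rfl
      · refine ⟨fun z hz => ?_, hrest.2⟩
        rcases List.mem_cons.1 hz with rfl | h
        · exact hy
        · exact hrest.1 z h
    · rw [if_neg hrest, mul_zero, if_neg]
      rintro ⟨hall, hlast⟩
      exact hrest ⟨fun z hz => hall z (List.mem_cons_of_mem y hz), hlast⟩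

open Classical in
lemma path_sum (p : S → S → ℝ) (R : Finset S) (j : S) :
    ∀ (n : ℕ) (x : S),
      ∑ v : Fin n → S, payload p R j x (List.ofFn v) = (Qm p R ^ n) x j := by
  intro n
  induction n with
  | zero =>
    intro x
    have hv : ∀ v : Fin 0 → S, payload p R j x (List.ofFn v) = if x = j then 1 else 0 := by
      intro v
      rw [List.ofFn_zero]
      unfold payload
      simp [wt]
    rw [Finset.sum_congr rfl fun v _ => hv v, Finset.sum_const, Finset.card_univ]
    rw [pow_zero, Matrix.one_apply]
    simp
  | succ n ih =>
    intro x
    let e : S × (Fin n → S) ≃ (Fin (n + 1) → S) := Fin.consEquiv (fun _ => S)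
    have hofn : ∀ (y : S) (v' : Fin n → S), List.ofFn (Fin.cons y v' : Fin (n+1) → S)
        = y :: List.ofFn v' := by
      intro y v'
      rw [List.ofFn_succ]
      congr 1
    have hcomp : ∀ q : S × (Fin n → S),
        payload p R j x (List.ofFn (e q)) = Qm p R x q.1 * payload p R j q.1 (List.ofFn q.2) := by
      rintro ⟨y, v'⟩
      have : e (y, v') = Fin.cons y v' := rfl
      rw [this, hofn, payload_cons]
      rfl
    rw [← Equiv.sum_comp e (fun v => payload p R j x (List.ofFn v)),
      Fintype.sum_prod_type]
    calc ∑ y : S, ∑ v' : Fin n → S, payload p R j x (List.ofFn (e (y, v')))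
        = ∑ y : S, ∑ v' : Fin n → S, Qm p R x y * payload p R j y (List.ofFn v') :=
          Finset.sum_congr rfl fun y _ => Finset.sum_congr rfl fun v' _ => hcomp (y, v')
      _ = ∑ y : S, Qm p R x y * (Qm p R ^ n) y j := by
          refine Finset.sum_congr rfl fun y _ => ?_
          rw [← Finset.mul_sum, ih y]
      _ = (Qm p R ^ (n + 1)) x j := by
          rw [pow_succ', Matrix.mul_apply]

/-- Repackaging a subtype of a sigma type as a sigma of subtypes. -/
def sigmaSubtypeEquivSigma {P : (Σ n : ℕ, Fin n → S) → Prop} :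
    {q : Σ n : ℕ, Fin n → S // P q} ≃ Σ n : ℕ, {v : Fin n → S // P ⟨n, v⟩} where
  toFun := fun ⟨⟨n, v⟩, h⟩ => ⟨n, v, h⟩
  invFun := fun ⟨n, v, h⟩ => ⟨⟨n, v⟩, h⟩
  left_inv := by rintro ⟨⟨n, v⟩, h⟩; rfl
  right_inv := by rintro ⟨n, v, h⟩; rfl

open Classical in
lemma green_eq_tsum (p : S → S → ℝ) {R : Finset S} (hp0 : ∀ a b, 0 ≤ p a b)
    (hrow : ∀ a, ∑ b, p a b = 1) (hw : 0 < w p R) {i : S} (hi : i ∉ R) (j : S) :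
    green p R i j = ∑' n : ℕ, (Qm p R ^ n) i j := by
  set P' : (Σ n : ℕ, Fin n → S) → Prop := fun q =>
    (∀ y ∈ List.ofFn q.2, y ∉ R) ∧ (List.ofFn q.2).getLastD i = j with hP'
  have hPiff : ∀ l : List S,
      ((∀ x ∈ l, x ∉ R) ∧ (i :: l).getLast (List.cons_ne_nil i l) = j)
        ↔ P' (List.equivSigmaTuple l) := by
    intro l
    have h1 : List.ofFn (List.equivSigmaTuple l).2 = l := List.ofFn_get l
    rw [hP', getLast_cons_eq_getLastD]
    constructor
    · rintro ⟨ha, hb⟩; exact ⟨by rw [h1]; exact ha, by rw [h1]; exact hb⟩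
    · rintro ⟨ha, hb⟩; rw [h1] at ha hb; exact ⟨ha, hb⟩
  let E : {l : List S // (∀ x ∈ l, x ∉ R) ∧ (i :: l).getLast (List.cons_ne_nil i l) = j}
      ≃ Σ n : ℕ, {v : Fin n → S // P' ⟨n, v⟩} :=
    (Equiv.subtypeEquiv List.equivSigmaTuple hPiff).trans sigmaSubtypeEquivSigma
  set F : (Σ n : ℕ, {v : Fin n → S // P' ⟨n, v⟩}) → ℝ :=
    fun q => wt p i (List.ofFn q.2.1) with hF
  have hcomp : ∀ q, wt p i ((E.symm q).1) = F q := by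
    rintro ⟨n, v, h⟩
    rfl
  have hfib : ∀ n : ℕ, ∑' (v : {v : Fin n → S // P' ⟨n, v⟩}), wt p i (List.ofFn v.1)
      = (Qm p R ^ n) i j := by
    intro n
    rw [tsum_fintype]
    rw [← Finset.sum_subtype (Finset.univ.filter (fun v : Fin n → S => P' ⟨n, v⟩))
      (by intro v; simp) (fun v => wt p i (List.ofFn v))]
    rw [Finset.sum_filter]
    rw [← path_sum p R j n i]
    refine Finset.sum_congr rfl fun v _ => ?_
    unfold payload
    congr 1
  have hnn : ∀ q, 0 ≤ F q := fun q => wt_nonneg hp0 _ _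
  have hsig : Summable F := by
    refine (summable_sigma_of_nonneg hnn).2 ⟨fun n => (hasSum_fintype _).summable, ?_⟩
    have : (fun n => ∑' (v : {v : Fin n → S // P' ⟨n, v⟩}), F ⟨n, v⟩)
        = fun n => (Qm p R ^ n) i j := funext fun n => hfib n
    rw [this]
    exact summable_Qpow hp0 hrow hw hi j
  calc green p R i j = ∑' q, wt p i ((E.symm q).1) := (Equiv.tsum_eq E.symm _).symm
    _ = ∑' q, F q := tsum_congr hcomp
    _ = ∑' n : ℕ, ∑' (v : {v : Fin n → S // P' ⟨n, v⟩}), F ⟨n, v⟩ := hsig.tsum_sigma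
    _ = ∑' n : ℕ, (Qm p R ^ n) i j := tsum_congr hfib
end Paths

/-- Green tree formula: `E_i[∑_{n<T_R} 1(X_n = j)] = w_{ij}(R ∪ {j}) / w(R)`. -/
theorem green_tree_formula {S : Type*} [Fintype S] [DecidableEq S]
    (p : S → S → ℝ) (hs : IsStochastic p) (R : Finset S) (hw : 0 < w p R)
    (i j : S) (hi : i ∉ R) (hj : j ∉ R) :
    green p R i j = wroot p (insert j R) i j / w p R := by
  classical
  obtain ⟨hp0, hrow⟩ := hs
  set v : S → ℝ := fun k => if k ∈ R then 0 else wroot p (insert k R) i k with hv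
  have hQ : ∀ (z y : S), y ∉ R → Qm p R z y = p z y := by
    intro z y hy
    unfold Qm
    dsimp only [Matrix.of_apply]
    exact if_neg hy
  have hkey : ∀ y, y ∉ R → v y = (if i = y then w p R else 0) + ∑ z, v z * Qm p R z y := by
    intro y hy
    have hk := key_identity p hrow (R := R) (i := i) (j := y) hy
    have hs1 : ∑ z, v z * Qm p R z y = ∑ k ∈ Rᶜ, wroot p (insert k R) i k * p k y := by
      rw [← Finset.sum_add_sum_compl R (fun z => v z * Qm p R z y)]
      have hz1 : ∑ z ∈ R, v z * Qm p R z y = 0 :=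
        Finset.sum_eq_zero fun z hz => by rw [hv]; dsimp only; rw [if_pos hz, zero_mul]
      rw [hz1, zero_add]
      refine Finset.sum_congr rfl fun z hz => ?_
      rw [hv]; dsimp only; rw [if_neg (Finset.mem_compl.1 hz), hQ z y hy]
    rw [hs1]
    have hvy : v y = wroot p (insert y R) i y := by rw [hv]; dsimp only; rw [if_neg hy]
    rw [hvy]
    exact hk
  have hiter : ∀ (M : ℕ) (y : S), y ∉ R →
      v y = w p R * (∑ n ∈ Finset.range M, (Qm p R ^ n) i y)
        + ∑ z, v z * (Qm p R ^ M) z y := by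
    intro M
    induction M with
    | zero =>
      intro y hy
      rw [Finset.range_zero, Finset.sum_empty, mul_zero, zero_add, pow_zero]
      have h1 : ∑ z, v z * (1 : Matrix S S ℝ) z y = v y := by
        have hpt : ∀ z : S, v z * (1 : Matrix S S ℝ) z y = if z = y then v z else 0 := by
          intro z
          rw [Matrix.one_apply]
          by_cases hz : z = y
          · rw [if_pos hz, if_pos hz, mul_one]
          · rw [if_neg hz, if_neg hz, mul_zero]
        rw [Finset.sum_congr rfl fun z _ => hpt z, Finset.sum_ite_eq' Finset.univ y v,
          if_pos (Finset.mem_univ y)]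
      rw [h1]
    | succ M ihM =>
      intro y hy
      have h1 := ihM y hy
      have hiRc : i ∈ Rᶜ := Finset.mem_compl.2 hi
      have htail : ∑ z, v z * (Qm p R ^ M) z y
          = w p R * (Qm p R ^ M) i y + ∑ u, v u * (Qm p R ^ (M + 1)) u y := by
        calc ∑ z, v z * (Qm p R ^ M) z y
            = ∑ z ∈ Rᶜ, v z * (Qm p R ^ M) z y := by
              rw [← Finset.sum_add_sum_compl R (fun z => v z * (Qm p R ^ M) z y)]
              have hz1 : ∑ z ∈ R, v z * (Qm p R ^ M) z y = 0 :=
                Finset.sum_eq_zero fun z hz => by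
                  rw [hv]; dsimp only; rw [if_pos hz, zero_mul]
              rw [hz1, zero_add]
          _ = ∑ z ∈ Rᶜ, ((if i = z then w p R else 0) * (Qm p R ^ M) z y
                + (∑ u, v u * Qm p R u z) * (Qm p R ^ M) z y) := by
              refine Finset.sum_congr rfl fun z hz => ?_
              rw [hkey z (Finset.mem_compl.1 hz), add_mul]
          _ = (∑ z ∈ Rᶜ, (if i = z then w p R else 0) * (Qm p R ^ M) z y)
                + ∑ z ∈ Rᶜ, (∑ u, v u * Qm p R u z) * (Qm p R ^ M) z y :=
              Finset.sum_add_distrib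
          _ = w p R * (Qm p R ^ M) i y + ∑ u, v u * (Qm p R ^ (M + 1)) u y := by
              congr 1
              · have hpt : ∀ z : S, (if i = z then w p R else 0) * (Qm p R ^ M) z y
                    = if i = z then w p R * (Qm p R ^ M) z y else 0 := by
                  intro z
                  by_cases hz : i = z
                  · rw [if_pos hz, if_pos hz]
                  · rw [if_neg hz, if_neg hz, zero_mul]
                rw [Finset.sum_congr rfl fun z _ => hpt z, Finset.sum_ite_eq Rᶜ i
                  (fun z => w p R * (Qm p R ^ M) z y), if_pos hiRc]
              · have hext : ∑ z ∈ Rᶜ, (∑ u, v u * Qm p R u z) * (Qm p R ^ M) z y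
                    = ∑ z, (∑ u, v u * Qm p R u z) * (Qm p R ^ M) z y := by
                  refine Finset.sum_subset (Finset.subset_univ Rᶜ) ?_
                  intro z _ hz
                  have hzR : z ∈ R := by simpa using hz
                  have h0 : ∑ u, v u * Qm p R u z = 0 :=
                    Finset.sum_eq_zero fun u _ => by rw [Qm_mem u hzR, mul_zero]
                  rw [h0, zero_mul]
                rw [hext]
                calc ∑ z, (∑ u, v u * Qm p R u z) * (Qm p R ^ M) z y
                    = ∑ z, ∑ u, v u * Qm p R u z * (Qm p R ^ M) z y := by
                      refine Finset.sum_congr rfl fun z _ => ?_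
                      rw [Finset.sum_mul]
                  _ = ∑ u, ∑ z, v u * Qm p R u z * (Qm p R ^ M) z y := Finset.sum_comm
                  _ = ∑ u, v u * (Qm p R ^ (M + 1)) u y := by
                      refine Finset.sum_congr rfl fun u _ => ?_
                      rw [pow_succ', Matrix.mul_apply, Finset.mul_sum]
                      refine Finset.sum_congr rfl fun z _ => ?_
                      ring
      rw [h1, htail, Finset.sum_range_succ, mul_add]
      ring
  have hsumQ : Summable (fun n => (Qm p R ^ n) i j) := summable_Qpow hp0 hrow hw hi j
  have hT1 : Filter.Tendsto (fun M => w p R * ∑ n ∈ Finset.range M, (Qm p R ^ n) i j)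
      Filter.atTop (nhds (w p R * ∑' n, (Qm p R ^ n) i j)) :=
    (hsumQ.hasSum.tendsto_sum_nat).const_mul (w p R)
  have hT2 : Filter.Tendsto (fun M => ∑ z, v z * (Qm p R ^ M) z j)
      Filter.atTop (nhds 0) := by
    have hz : ∀ z : S, Filter.Tendsto (fun M => v z * (Qm p R ^ M) z j)
        Filter.atTop (nhds 0) := by
      intro z
      by_cases hzR : z ∈ R
      · have he : (fun M => v z * (Qm p R ^ M) z j) = fun _ => 0 := by
          funext M; rw [hv]; dsimp only; rw [if_pos hzR, zero_mul]
        rw [he]; exact tendsto_const_nhds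
      · have h0 := (summable_Qpow hp0 hrow hw hzR j).tendsto_atTop_zero
        have h1 := h0.const_mul (v z)
        simpa using h1
    have hs2 := tendsto_finset_sum Finset.univ (fun z _ => hz z)
    simpa using hs2
  have hconst : Filter.Tendsto (fun _ : ℕ => v j) Filter.atTop (nhds (v j)) :=
    tendsto_const_nhds
  have hfun : (fun _ : ℕ => v j) = fun M => w p R * (∑ n ∈ Finset.range M, (Qm p R ^ n) i j)
      + ∑ z, v z * (Qm p R ^ M) z j := funext fun M => hiter M j hj
  rw [hfun] at hconst
  have hlim := tendsto_nhds_unique hconst (hT1.add hT2)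
  rw [add_zero] at hlim
  have hvj : v j = wroot p (insert j R) i j := by rw [hv]; dsimp only; rw [if_neg hj]
  rw [green_eq_tsum p hp0 hrow hw hi j, eq_div_iff (ne_of_gt hw), ← hvj, hlim]
  ring
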